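/- Let $1 \leq a < b \leq c < e < d$ be integers with $e \leq 2b$ and $2c \leq a+d$. Define $E_n = \bigcup_{i+j+l = n, \; i,j,l \geq 0} [jb + le, ia + jc + ld]$. Then for $n \geq 1$, $E_{n+1} = E_n + \{0,d\}$ if and only if $na + 1 \geq b$, $(n-1)a + c + 1 \geq e$, $n(d-e) \geq d - c - 1$, and $n(d-e) \geq d - e + b - a - 1$. -/
import Mathlib


open Pointwise

private lemma mem_add_pair {E : Set ℤ} {d x : ℤ} :
    x ∈ E + ({0, d} : Set ℤ) ↔ x ∈ E ∨ x - d ∈ E := by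
  rw [Set.mem_add]
  constructor
  · rintro ⟨y, hy, z, hz, hzz⟩
    simp only [Set.mem_insert_iff, Set.mem_singleton_iff] at hz
    rcases hz with rfl | rfl
    · left; simpa [← hzz] using hy
    · right; simpa [← hzz] using hy
  · rintro (h | h)
    · exact ⟨x, h, 0, by simp, by ring⟩
    · exact ⟨x - d, h, d, by simp, by ring⟩

private lemma coverE (a b c e d : ℤ) (ha : 1 ≤ a) (hab : a < b) (hbc : b ≤ c)
    (hce : c < e) (hed : e < d) (n : ℕ) (hn : 1 ≤ n)
    (C1 : b - 1 ≤ (n : ℤ) * a) (C2 : e - c - 1 ≤ ((n : ℤ) - 1) * a)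
    (C3 : d - c - 1 ≤ (n : ℤ) * (d - e)) (C4 : b - a - 1 ≤ ((n : ℤ) - 1) * (d - e))
    (x : ℤ) (hx0 : 0 ≤ x) (hxn : x ≤ (n : ℤ) * d) :
    ∃ i j l : ℕ, i + j + l = n ∧ (j : ℤ) * b + (l : ℤ) * e ≤ x ∧
      x ≤ (i : ℤ) * a + (j : ℤ) * c + (l : ℤ) * d := by
  have he0 : (0:ℤ) < e := by linarith
  by_cases hbig : (n : ℤ) * e ≤ x
  · exact ⟨0, 0, n, by omega, by push_cast; linarith, by push_cast; linarith⟩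
  · push_neg at hbig
    have hdm := Int.mul_ediv_add_emod x e
    have hm0 : 0 ≤ x % e := Int.emod_nonneg x (ne_of_gt he0)
    have hme : x % e < e := Int.emod_lt_of_pos x he0
    have hL0 : 0 ≤ x / e := Int.ediv_nonneg hx0 he0.le
    obtain ⟨l, hl⟩ : ∃ l : ℕ, (l : ℤ) = x / e := ⟨(x / e).toNat, Int.toNat_of_nonneg hL0⟩
    have hLl : (l : ℤ) * e ≤ x := by rw [hl]; linarith
    have hLu : x < (l : ℤ) * e + e := by rw [hl]; linarith
    have hln : l < n := by
      by_contra hc'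
      push_neg at hc'
      have : (n : ℤ) ≤ (l : ℤ) := by exact_mod_cast hc'
      nlinarith
    by_cases hP : x ≤ ((n : ℤ) - l) * a + l * d
    · refine ⟨n - l, 0, l, by omega, by push_cast; linarith, ?_⟩
      have hcst : ((n - l : ℕ) : ℤ) = (n : ℤ) - l := by omega
      rw [hcst]
      push_cast
      linarith
    · push_neg at hP
      have hl1 : (l : ℤ) ≤ (n : ℤ) - 1 := by omega
      have hl0' : (0:ℤ) ≤ (l : ℤ) := by positivity
      refine ⟨n - 1 - l, 1, l, by omega, ?_, ?_⟩
      · rcases le_or_gt a (d - e) with h | h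
        · have h1 : (0:ℤ) ≤ (l : ℤ) * (d - e - a) := mul_nonneg hl0' (by linarith)
          push_cast
          linarith
        · have h1 : (0:ℤ) ≤ ((n : ℤ) - 1 - l) * (a - (d - e)) :=
            mul_nonneg (by linarith) (by linarith)
          push_cast
          linarith
      · have hcst : ((n - 1 - l : ℕ) : ℤ) = (n : ℤ) - 1 - l := by omega
        rw [hcst]
        push_cast
        rcases le_or_gt a (d - e) with h | h
        · have h1 : (0:ℤ) ≤ (l : ℤ) * (d - e - a) := mul_nonneg hl0' (by linarith)
          linarith
        · have h1 : (0:ℤ) ≤ ((n : ℤ) - 1 - l) * (a - (d - e)) :=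
            mul_nonneg (by linarith) (by linarith)
          linarith

/-- Theorem 6.2 (Case E combinatorics): for `1 ≤ a < b ≤ c < e < d` with `e ≤ 2b`,
`2c ≤ a+d`, and `E n = ⋃_{i+j+l = n} [jb+le, ia+jc+ld]`, one has
`E (n+1) = E n + {0,d}` iff `na+1 ≥ b`, `(n-1)a+c+1 ≥ e`, `n(d-e) ≥ d-c-1` and
`n(d-e) ≥ d-e+b-a-1`, for `n ≥ 1`. -/
theorem caseE_iff (a b c e d : ℤ) (ha : 1 ≤ a) (hab : a < b) (hbc : b ≤ c)
    (hce : c < e) (hed : e < d) (he : e ≤ 2 * b) (hc : 2 * c ≤ a + d)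
    (E : ℕ → Set ℤ)
    (hE : ∀ n : ℕ, E n = ⋃ i : ℕ, ⋃ j : ℕ, ⋃ l : ℕ, ⋃ (_ : i + j + l = n),
        Set.Icc ((j : ℤ) * b + (l : ℤ) * e)
          ((i : ℤ) * a + (j : ℤ) * c + (l : ℤ) * d)) :
    ∀ n : ℕ, 1 ≤ n →
      (E (n + 1) = E n + ({0, d} : Set ℤ) ↔
        ((n : ℤ) * a + 1 ≥ b ∧ ((n : ℤ) - 1) * a + c + 1 ≥ e ∧
          (n : ℤ) * (d - e) ≥ d - c - 1 ∧ (n : ℤ) * (d - e) ≥ d - e + b - a - 1)) := by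
  have hb0 : (0:ℤ) < b := by linarith
  have he0 : (0:ℤ) < e := by linarith
  have hd0 : (0:ℤ) < d := by linarith
  have memE : ∀ (m : ℕ) (y : ℤ), y ∈ E m ↔ ∃ i j l : ℕ, i + j + l = m ∧
      ((j:ℤ)*b + (l:ℤ)*e ≤ y ∧ y ≤ (i:ℤ)*a + (j:ℤ)*c + (l:ℤ)*d) := by
    intro m y
    rw [hE m]
    simp only [Set.mem_iUnion, Set.mem_Icc, exists_prop]
  have key : ∀ m : ℕ, 1 ≤ m → b - 1 ≤ (m:ℤ)*a → e - c - 1 ≤ ((m:ℤ)-1)*a →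
      d - c - 1 ≤ (m:ℤ)*(d-e) → b - a - 1 ≤ ((m:ℤ)-1)*(d-e) →
      E m = Set.Icc 0 ((m:ℤ)*d) := by
    intro m hm hC1 hC2 hC3 hC4
    ext y
    rw [memE, Set.mem_Icc]
    constructor
    · rintro ⟨i, j, l, hs, hly, huy⟩
      have hsz : (i:ℤ) + j + l = m := by exact_mod_cast hs
      have hid : (i:ℤ)*d + (j:ℤ)*d + (l:ℤ)*d = (m:ℤ)*d := by linear_combination d * hsz
      have t1 : (0:ℤ) ≤ (i:ℤ)*(d-a) := mul_nonneg (by positivity) (by linarith)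
      have t2 : (0:ℤ) ≤ (j:ℤ)*(d-c) := mul_nonneg (by positivity) (by linarith)
      have t3 : (0:ℤ) ≤ (j:ℤ)*b := mul_nonneg (by positivity) hb0.le
      have t4 : (0:ℤ) ≤ (l:ℤ)*e := mul_nonneg (by positivity) he0.le
      exact ⟨by linarith, by linarith⟩
    · rintro ⟨h0, hm'⟩
      exact coverE a b c e d ha hab hbc hce hed m hm hC1 hC2 hC3 hC4 y h0 hm'
  intro n hn
  have hn1 : (1:ℤ) ≤ (n:ℤ) := by exact_mod_cast hn
  constructor
  · intro hEq
    refine ⟨?_, ?_, ?_, ?_⟩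
    · -- C1
      by_contra hcon
      push_neg at hcon
      have hna : (0:ℤ) ≤ (n:ℤ)*a := mul_nonneg (by positivity) (by linarith)
      have hx : ((n:ℤ)*a + 1) ∈ E (n+1) := by
        rw [memE]
        exact ⟨n+1, 0, 0, by omega, by push_cast; linarith, by push_cast; linarith⟩
      rw [hEq, mem_add_pair] at hx
      rcases hx with hx | hx <;> rw [memE] at hx <;> obtain ⟨i, j, l, hs, hly, huy⟩ := hx
      · rcases Nat.eq_zero_or_pos (j + l) with hjl | hjl
        · obtain ⟨hj0, hl0⟩ : j = 0 ∧ l = 0 := by omega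
          subst hj0; subst hl0
          have hin : (i:ℤ) = n := by omega
          have hia : (i:ℤ)*a = (n:ℤ)*a := by rw [hin]
          push_cast at huy
          linarith
        · have hjl1 : (1:ℤ) ≤ (j:ℤ) + l := by exact_mod_cast hjl
          have t1 : (0:ℤ) ≤ (l:ℤ)*(e-b) := mul_nonneg (by positivity) (by linarith)
          have t2 : (0:ℤ) ≤ ((j:ℤ)+l-1)*b := mul_nonneg (by linarith) hb0.le
          linarith
      · have t1 : (0:ℤ) ≤ (j:ℤ)*b := mul_nonneg (by positivity) hb0.le
        have t2 : (0:ℤ) ≤ (l:ℤ)*e := mul_nonneg (by positivity) he0.le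
        linarith
    · -- C2
      by_contra hcon
      push_neg at hcon
      have hn1a : (0:ℤ) ≤ ((n:ℤ)-1)*a := mul_nonneg (by linarith) (by linarith)
      have hx : (((n:ℤ)-1)*a + c + 1) ∈ E (n+1) := by
        rw [memE]
        exact ⟨n, 1, 0, by omega, by push_cast; linarith, by push_cast; linarith⟩
      rw [hEq, mem_add_pair] at hx
      rcases hx with hx | hx <;> rw [memE] at hx <;> obtain ⟨i, j, l, hs, hly, huy⟩ := hx
      · rcases Nat.eq_zero_or_pos l with hl0 | hlpos
        · subst hl0
          rcases j with _ | _ | j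
          · have hin : (i:ℤ) = n := by omega
            have hia : (i:ℤ)*a = (n:ℤ)*a := by rw [hin]
            push_cast at huy
            linarith
          · have hin : (i:ℤ) = (n:ℤ) - 1 := by omega
            have hia : (i:ℤ)*a = ((n:ℤ)-1)*a := by rw [hin]
            push_cast at huy
            linarith
          · have t : (0:ℤ) ≤ (j:ℤ)*b := mul_nonneg (by positivity) hb0.le
            push_cast at hly
            linarith
        · have hl1 : (1:ℤ) ≤ (l:ℤ) := by exact_mod_cast hlpos
          have t1 : (0:ℤ) ≤ (j:ℤ)*b := mul_nonneg (by positivity) hb0.le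
          have t2 : (0:ℤ) ≤ ((l:ℤ)-1)*e := mul_nonneg (by linarith) he0.le
          linarith
      · have t1 : (0:ℤ) ≤ (j:ℤ)*b := mul_nonneg (by positivity) hb0.le
        have t2 : (0:ℤ) ≤ (l:ℤ)*e := mul_nonneg (by positivity) he0.le
        linarith
    · -- C3
      by_contra hcon
      push_neg at hcon
      have hnde : (0:ℤ) ≤ (n:ℤ)*(d-e) := mul_nonneg (by positivity) (by linarith)
      have hx : ((n:ℤ)*e + d - 1) ∈ E (n+1) := by
        rw [memE]
        exact ⟨0, 0, n+1, by omega, by push_cast; linarith, by push_cast; linarith⟩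
      rw [hEq, mem_add_pair] at hx
      rcases hx with hx | hx <;> rw [memE] at hx <;> obtain ⟨i, j, l, hs, hly, huy⟩ := hx
      · have hsz : (i:ℤ) + j + l = n := by exact_mod_cast hs
        have hid : (i:ℤ)*d + (j:ℤ)*d + (l:ℤ)*d = (n:ℤ)*d := by linear_combination d * hsz
        have t1 : (0:ℤ) ≤ (i:ℤ)*(d-a) := mul_nonneg (by positivity) (by linarith)
        have t2 : (0:ℤ) ≤ (j:ℤ)*(d-c) := mul_nonneg (by positivity) (by linarith)
        linarith
      · have hsz : (i:ℤ) + j + l = n := by exact_mod_cast hs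
        rcases Nat.eq_zero_or_pos (i + j) with hij | hij
        · have hln : (l:ℤ) = n := by omega
          have hle : (l:ℤ)*e = (n:ℤ)*e := by rw [hln]
          have t1 : (0:ℤ) ≤ (j:ℤ)*b := mul_nonneg (by positivity) hb0.le
          linarith
        · have hij1 : (1:ℤ) ≤ (i:ℤ) + j := by exact_mod_cast hij
          have hie : (i:ℤ)*e + (j:ℤ)*e + (l:ℤ)*e = (n:ℤ)*e := by linear_combination e * hsz
          have t1 : (0:ℤ) ≤ (i:ℤ)*(c-a) := mul_nonneg (by positivity) (by linarith)
          have t2 : (0:ℤ) ≤ ((i:ℤ)+j-1)*(e-c) := mul_nonneg (by linarith) (by linarith)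
          have hln1 : (l:ℤ) ≤ (n:ℤ) - 1 := by omega
          have t3 : (0:ℤ) ≤ ((n:ℤ)-1-l)*(d-e) := mul_nonneg (by linarith) (by linarith)
          linarith
    · -- C4
      by_contra hcon
      push_neg at hcon
      have hn1de : (0:ℤ) ≤ ((n:ℤ)-1)*(d-e) := mul_nonneg (by linarith) (by linarith)
      have hx : (b + ((n:ℤ)-1)*e + d - 1) ∈ E (n+1) := by
        rw [memE]
        exact ⟨0, 1, n, by omega, by push_cast; linarith, by push_cast; linarith⟩
      rw [hEq, mem_add_pair] at hx
      rcases hx with hx | hx <;> rw [memE] at hx <;> obtain ⟨i, j, l, hs, hly, huy⟩ := hx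
      · have hsz : (i:ℤ) + j + l = n := by exact_mod_cast hs
        have hid : (i:ℤ)*d + (j:ℤ)*d + (l:ℤ)*d = (n:ℤ)*d := by linear_combination d * hsz
        have t1 : (0:ℤ) ≤ (i:ℤ)*(d-a) := mul_nonneg (by positivity) (by linarith)
        have t2 : (0:ℤ) ≤ (j:ℤ)*(d-c) := mul_nonneg (by positivity) (by linarith)
        linarith
      · rcases Nat.eq_zero_or_pos i with hi0 | hipos
        · subst hi0
          rcases j with _ | _ | j
          · have hln : (l:ℤ) = n := by omega
            have hle : (l:ℤ)*e = (n:ℤ)*e := by rw [hln]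
            push_cast at hly
            linarith
          · have hln : (l:ℤ) = (n:ℤ) - 1 := by omega
            have hle : (l:ℤ)*e = (n:ℤ)*e - e := by rw [hln]; ring
            push_cast at hly
            linarith
          · have hsz' : (j:ℤ) + 2 + l = n := by omega
            have hid2 : ((j:ℤ)+2)*d + (l:ℤ)*d = (n:ℤ)*d := by linear_combination d * hsz'
            have t1 : (0:ℤ) ≤ (j:ℤ)*(d-c) := mul_nonneg (by positivity) (by linarith)
            push_cast at huy
            linarith
        · have hsz : (i:ℤ) + j + l = n := by exact_mod_cast hs
          have hi1 : (1:ℤ) ≤ (i:ℤ) := by exact_mod_cast hipos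
          have hid : (i:ℤ)*d + (j:ℤ)*d + (l:ℤ)*d = (n:ℤ)*d := by linear_combination d * hsz
          have t1 : (0:ℤ) ≤ (j:ℤ)*(d-c) := mul_nonneg (by positivity) (by linarith)
          have t2 : (0:ℤ) ≤ ((i:ℤ)-1)*(d-a) := mul_nonneg (by linarith) (by linarith)
          linarith
  · rintro ⟨h1, h2, h3, h4⟩
    have hEn : E n = Set.Icc 0 ((n:ℤ)*d) :=
      key n hn (by linarith) (by linarith) (by linarith) (by linarith)
    have hEn1 : E (n+1) = Set.Icc 0 (((n+1:ℕ):ℤ)*d) :=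
      key (n+1) (by omega) (by push_cast; linarith) (by push_cast; linarith)
        (by push_cast; linarith) (by push_cast; linarith)
    rw [hEn1, hEn]
    ext y
    rw [mem_add_pair]
    simp only [Set.mem_Icc]
    push_cast
    have hnd : d ≤ (n:ℤ)*d := by nlinarith
    constructor
    · rintro ⟨hy0, hyu⟩
      rcases le_or_gt y ((n:ℤ)*d) with h | h
      · exact Or.inl ⟨hy0, h⟩
      · exact Or.inr ⟨by linarith, by linarith⟩
    · rintro (⟨hy0, hyu⟩ | ⟨hy0, hyu⟩)
      · exact ⟨hy0, by linarith⟩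
      · exact ⟨by linarith, by linarith⟩
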